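/- Let Γ be a countable set, M a measurable space, and X = (X_k)_{k∈Γ} a family of independent random variables with values in M, where X_k has distribution p_k. Let E ⊆ M^Γ be a measurable event such that for every finite subset J ⊆ Γ and every δ > 0, there exists an injective map π : Γ → Γ which is a positional symmetry of E, satisfies π(J) ∩ J = ∅, and satisfies ∑_{k∈Γ} ‖p_{π(k)} − p_k‖_TV < δ. Then P(X ∈ E) ∈ {0, 1}. -/

import Mathlib

open MeasureTheory ProbabilityTheory

/-- The total variation distance `sup_A |μ(A) - ν(A)|` between two measures,
the supremum ranging over measurable sets. -/
noncomputable def tvDist {X : Type*} [MeasurableSpace X] (μ ν : Measure X) : ℝ :=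
  ⨆ A : {A : Set X // MeasurableSet A}, |(μ A).toReal - (ν A).toReal|

section Helpers

variable {α β : Type*} [MeasurableSpace α] [MeasurableSpace β]

lemma toReal_prob_le_one (μ : Measure α) [IsProbabilityMeasure μ] (A : Set α) :
    (μ A).toReal ≤ 1 := by
  have h := prob_le_one (μ := μ) (s := A)
  simpa using ENNReal.toReal_mono (by simp) h

lemma abs_sub_le_tvDist (μ ν : Measure α) [IsProbabilityMeasure μ] [IsProbabilityMeasure ν]
    {A : Set α} (hA : MeasurableSet A) :
    |(μ A).toReal - (ν A).toReal| ≤ tvDist μ ν := by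
  have hbdd : BddAbove (Set.range fun B : {B : Set α // MeasurableSet B} =>
      |(μ B).toReal - (ν B).toReal|) := by
    refine ⟨1, ?_⟩
    rintro x ⟨B, rfl⟩
    have h1 := toReal_prob_le_one μ (B : Set α)
    have h2 := toReal_prob_le_one ν (B : Set α)
    have h3 : (0:ℝ) ≤ (μ (B : Set α)).toReal := ENNReal.toReal_nonneg
    have h4 : (0:ℝ) ≤ (ν (B : Set α)).toReal := ENNReal.toReal_nonneg
    rw [abs_le]; constructor <;> linarith
  exact le_ciSup hbdd (⟨A, hA⟩ : {B : Set α // MeasurableSet B})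

lemma tvDist_nonneg (μ ν : Measure α) [IsProbabilityMeasure μ] [IsProbabilityMeasure ν] :
    0 ≤ tvDist μ ν :=
  le_trans (abs_nonneg _) (abs_sub_le_tvDist μ ν MeasurableSet.empty)

/-- helper predicate: all measurable sets have probabilities within `c`. -/
def TVLE (μ ν : Measure α) (c : ℝ) : Prop :=
  ∀ S : Set α, MeasurableSet S → |(μ S).toReal - (ν S).toReal| ≤ c

lemma TVLE.of_tvDist (μ ν : Measure α) [IsProbabilityMeasure μ] [IsProbabilityMeasure ν] :
    TVLE μ ν (tvDist μ ν) := fun _ hS => abs_sub_le_tvDist μ ν hS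

lemma TVLE.mono {μ ν : Measure α} {c c' : ℝ} (h : TVLE μ ν c) (hcc : c ≤ c') : TVLE μ ν c' :=
  fun S hS => (h S hS).trans hcc

lemma TVLE.map {μ ν : Measure α} {c : ℝ} (h : TVLE μ ν c) {f : α → β} (hf : Measurable f) :
    TVLE (μ.map f) (ν.map f) c := fun S hS => by
  rw [Measure.map_apply hf hS, Measure.map_apply hf hS]
  exact h _ (hf hS)

lemma TVLE.trans {μ ρ ν : Measure α} {c₁ c₂ : ℝ} (h1 : TVLE μ ρ c₁) (h2 : TVLE ρ ν c₂) :
    TVLE μ ν (c₁ + c₂) := fun S hS =>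
  (abs_sub_le _ _ _).trans (add_le_add (h1 S hS) (h2 S hS))

lemma TVLE.prod_left {μ₁ ν₁ : Measure α} {Q : Measure β} [IsProbabilityMeasure μ₁]
    [IsProbabilityMeasure ν₁] [IsProbabilityMeasure Q] {c : ℝ}
    (h : TVLE μ₁ ν₁ c) : TVLE (μ₁.prod Q) (ν₁.prod Q) c := by
  intro S hS
  rw [Measure.prod_apply_symm hS, Measure.prod_apply_symm hS]
  set f : β → ℝ := fun y => (μ₁ ((fun x => (x, y)) ⁻¹' S)).toReal with hf
  set g : β → ℝ := fun y => (ν₁ ((fun x => (x, y)) ⁻¹' S)).toReal with hg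
  have hfm : Measurable f := (measurable_measure_prodMk_right hS).ennreal_toReal
  have hgm : Measurable g := (measurable_measure_prodMk_right hS).ennreal_toReal
  have hfI : Integrable f Q := by
    refine (integrable_const (1:ℝ)).mono' hfm.aestronglyMeasurable (ae_of_all _ fun y => ?_)
    rw [Real.norm_eq_abs, abs_of_nonneg ENNReal.toReal_nonneg]
    exact toReal_prob_le_one _ _
  have hgI : Integrable g Q := by
    refine (integrable_const (1:ℝ)).mono' hgm.aestronglyMeasurable (ae_of_all _ fun y => ?_)
    rw [Real.norm_eq_abs, abs_of_nonneg ENNReal.toReal_nonneg]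
    exact toReal_prob_le_one _ _
  have h1 : (∫⁻ y, μ₁ ((fun x => (x, y)) ⁻¹' S) ∂Q).toReal = ∫ y, f y ∂Q := by
    rw [integral_toReal (measurable_measure_prodMk_right hS).aemeasurable
      (ae_of_all _ fun y => measure_lt_top _ _)]
  have h2 : (∫⁻ y, ν₁ ((fun x => (x, y)) ⁻¹' S) ∂Q).toReal = ∫ y, g y ∂Q := by
    rw [integral_toReal (measurable_measure_prodMk_right hS).aemeasurable
      (ae_of_all _ fun y => measure_lt_top _ _)]
  rw [h1, h2, ← integral_sub hfI hgI]
  have habs : |∫ y, (f y - g y) ∂Q| ≤ ∫ y, |f y - g y| ∂Q := by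
    have := norm_integral_le_integral_norm (μ := Q) (f := fun y => f y - g y)
    simpa [Real.norm_eq_abs] using this
  calc |∫ y, (f y - g y) ∂Q| ≤ ∫ y, |f y - g y| ∂Q := habs
    _ ≤ ∫ _, c ∂Q := by
        refine integral_mono (hfI.sub hgI).abs (integrable_const c) fun y => ?_
        exact h _ (hS.preimage measurable_prodMk_right)
    _ = c := by simp

end Helpers

section PiTV

lemma measure_pi_congr_fintype {ι : Type*} {α : ι → Type*} (F1 F2 : Fintype ι)
    [m : ∀ i, MeasurableSpace (α i)] (μ : ∀ i, Measure (α i)) :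
    @Measure.pi ι α F1 m μ = @Measure.pi ι α F2 m μ := by
  obtain rfl : F1 = F2 := Subsingleton.elim _ _
  rfl

variable {ι : Type*} [Fintype ι] {M : Type*} [MeasurableSpace M]

lemma pi_subtype_singleton_eq (a : ι) (κ : ι → Measure M)
    (hκ : ∀ i, IsProbabilityMeasure (κ i)) :
    (Measure.pi fun i : {i // i = a} => κ (i : ι))
      = (κ a).map (fun x (_ : {i // i = a}) => x) := by
  haveI := hκ
  refine Measure.pi_eq fun A hA => ?_
  have hm : Measurable (fun x (_ : {i // i = a}) => x : M → {i // i = a} → M) :=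
    measurable_pi_lambda _ fun _ => measurable_id
  rw [Measure.map_apply hm (MeasurableSet.univ_pi hA)]
  have d : {i // i = a} := ⟨a, rfl⟩
  have hpre : (fun x (_ : {i // i = a}) => x : M → {i // i = a} → M) ⁻¹' Set.pi Set.univ A
      = A ⟨a, rfl⟩ := by
    ext x
    simp only [Set.mem_preimage, Set.mem_pi, Set.mem_univ, forall_true_left]
    constructor
    · intro h; exact h ⟨a, rfl⟩
    · intro h i; have : i = ⟨a, rfl⟩ := Subtype.ext i.2; rw [this]; exact h
  rw [hpre]
  rw [Fintype.prod_eq_single (⟨a, rfl⟩ : {i // i = a})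
    (fun j hj => absurd (Subtype.ext j.2) hj)]

lemma TVLE.pi_single [DecidableEq ι] (a : ι) (μ ν : ι → Measure M)
    (hμ : ∀ i, IsProbabilityMeasure (μ i)) (hν : ∀ i, IsProbabilityMeasure (ν i))
    (hagree : ∀ i, i ≠ a → μ i = ν i) {c : ℝ} (h : TVLE (μ a) (ν a) c) :
    TVLE (Measure.pi μ) (Measure.pi ν) c := by
  haveI := hμ; haveI := hν
  set e := MeasurableEquiv.piEquivPiSubtypeProd (fun _ : ι => M) (· = a) with he
  have hsplit : ∀ κ : ι → Measure M, (∀ i, IsProbabilityMeasure (κ i)) →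
      Measure.pi κ = (((Measure.pi fun i : {i // i = a} => κ (i : ι)).prod
        (Measure.pi fun i : {i // ¬ i = a} => κ (i : ι))).map e.symm) := by
    intro κ hκ
    haveI := hκ
    have h1 := (measurePreserving_piEquivPiSubtypeProd (μ := κ) (· = a)).map_eq
    have h2 := (MeasurableEquiv.map_symm_map (μ := Measure.pi κ) e).symm
    rw [h1] at h2
    refine h2.trans (congrArg _ ?_)
    congr 1
    all_goals exact measure_pi_congr_fintype _ _ _
  have hright : (Measure.pi fun i : {i // ¬ i = a} => μ (i : ι))
      = (Measure.pi fun i : {i // ¬ i = a} => ν (i : ι)) := by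
    congr 1
    exact funext fun i => hagree i i.2
  have hm : Measurable (fun x (_ : {i // i = a}) => x : M → {i // i = a} → M) :=
    measurable_pi_lambda _ fun _ => measurable_id
  have hone : TVLE (Measure.pi fun i : {i // i = a} => μ (i : ι))
      (Measure.pi fun i : {i // i = a} => ν (i : ι)) c := by
    rw [pi_subtype_singleton_eq a μ hμ, pi_subtype_singleton_eq a ν hν]
    exact h.map hm
  rw [hsplit μ hμ, hsplit ν hν, ← hright]
  exact (hone.prod_left).map (MeasurableEquiv.measurable _)

lemma TVLE.pi [DecidableEq ι] (s : Finset ι) :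
    ∀ (μ ν : ι → Measure M), (∀ i, IsProbabilityMeasure (μ i)) →
    (∀ i, IsProbabilityMeasure (ν i)) → (∀ i ∉ s, μ i = ν i) →
    TVLE (Measure.pi μ) (Measure.pi ν) (∑ i ∈ s, tvDist (μ i) (ν i)) := by
  induction s using Finset.induction_on with
  | empty =>
    intro μ ν hμ hν hagree
    have hμν : μ = ν := funext fun i => hagree i (by simp)
    subst hμν
    intro S hS; simp
  | @insert a s ha ih =>
    intro μ ν hμ hν hagree
    set w : ι → Measure M := Function.update μ a (ν a) with hw
    have hwa : w a = ν a := Function.update_self a (ν a) μ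
    have hwi : ∀ i, i ≠ a → w i = μ i := fun i hi => Function.update_of_ne hi (ν a) μ
    have hwP : ∀ i, IsProbabilityMeasure (w i) := by
      intro i
      rcases eq_or_ne i a with rfl | hi
      · rw [hwa]; exact hν _
      · rw [hwi i hi]; exact hμ i
    have h1 : TVLE (Measure.pi μ) (Measure.pi w) (tvDist (μ a) (ν a)) := by
      refine TVLE.pi_single a μ w hμ hwP (fun i hi => (hwi i hi).symm) ?_
      haveI := hμ a; haveI := hν a
      rw [hwa]
      exact TVLE.of_tvDist (μ a) (ν a)
    have h2 : TVLE (Measure.pi w) (Measure.pi ν) (∑ i ∈ s, tvDist (μ i) (ν i)) := by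
      have hag : ∀ i ∉ s, w i = ν i := by
        intro i hi
        rcases eq_or_ne i a with rfl | hne
        · exact hwa
        · rw [hwi i hne]; exact hagree i (by simp [hi, hne])
      have := ih w ν hwP hν hag
      have hsum : (∑ i ∈ s, tvDist (w i) (ν i)) = ∑ i ∈ s, tvDist (μ i) (ν i) :=
        Finset.sum_congr rfl fun i hi => by rw [hwi i (fun h => ha (h ▸ hi))]
      rwa [hsum] at this
    have h3 := h1.trans h2
    rwa [Finset.sum_insert ha]

end PiTV

section Approx

open scoped symmDiff

lemma abs_toReal_sub_le_symmDiff {α : Type*} [MeasurableSpace α] (μ : Measure α)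
    [IsFiniteMeasure μ] (S T : Set α) :
    |(μ S).toReal - (μ T).toReal| ≤ (μ (S ∆ T)).toReal := by
  have key : ∀ U V : Set α, μ U ≤ μ V + μ (U ∆ V) := by
    intro U V
    refine (measure_mono ?_).trans (measure_union_le _ _)
    intro x hx
    by_cases h : x ∈ V
    · exact Set.mem_union_left _ h
    · exact Set.mem_union_right _ (Set.mem_symmDiff.2 (Or.inl ⟨hx, h⟩))
  have f1 : (μ S).toReal ≤ (μ T).toReal + (μ (S ∆ T)).toReal := by
    have h := ENNReal.toReal_mono
      (ENNReal.add_ne_top.2 ⟨measure_ne_top _ _, measure_ne_top _ _⟩) (key S T)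
    rwa [ENNReal.toReal_add (measure_ne_top _ _) (measure_ne_top _ _)] at h
  have f2 : (μ T).toReal ≤ (μ S).toReal + (μ (S ∆ T)).toReal := by
    have h := ENNReal.toReal_mono
      (ENNReal.add_ne_top.2 ⟨measure_ne_top _ _, measure_ne_top _ _⟩) (key T S)
    rw [ENNReal.toReal_add (measure_ne_top _ _) (measure_ne_top _ _)] at h
    rwa [symmDiff_comm] at h
  rw [abs_le]
  constructor <;> linarith

lemma tvle_of_cylinders {Γ M : Type*} [MeasurableSpace M]
    (μ ν : Measure (Γ → M)) [IsProbabilityMeasure μ] [IsProbabilityMeasure ν] {δ : ℝ}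
    (hcyl : ∀ S ∈ measurableCylinders (fun _ : Γ => M), |(μ S).toReal - (ν S).toReal| ≤ δ) :
    TVLE μ ν δ := by
  intro S hS
  have halg : IsSetAlgebra (measurableCylinders (fun _ : Γ => M)) :=
    ⟨empty_mem_measurableCylinders _, fun s hs => compl_mem_measurableCylinders hs,
     fun s t hs ht => union_mem_measurableCylinders hs ht⟩
  have hdense : (μ + ν).MeasureDense (measurableCylinders (fun _ : Γ => M)) :=
    Measure.MeasureDense.of_generateFrom_isSetAlgebra_finite (μ + ν) halg
      (generateFrom_measurableCylinders (α := fun _ : Γ => M)).symm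
  by_contra hcon
  push_neg at hcon
  set η := (|(μ S).toReal - (ν S).toReal| - δ) / 3 with hη
  have hηpos : 0 < η := by
    have := hcon
    simp only [hη]
    linarith
  obtain ⟨C, hCmem, hCapp⟩ := hdense.approx S hS (measure_ne_top _ _) η hηpos
  have hble : ∀ ρ : Measure (Γ → M), ρ ≤ μ + ν → IsProbabilityMeasure ρ →
      (ρ (S ∆ C)).toReal < η := by
    intro ρ hρ _
    have h2 : ρ (S ∆ C) < ENNReal.ofReal η := lt_of_le_of_lt (hρ _) hCapp
    exact (ENNReal.lt_ofReal_iff_toReal_lt (measure_ne_top _ _)).1 h2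
  have hμb := hble μ (Measure.le_add_right le_rfl) inferInstance
  have hνb := hble ν (Measure.le_add_left le_rfl) inferInstance
  have hc := hcyl C hCmem
  have e1 := abs_toReal_sub_le_symmDiff μ S C
  have e2 := abs_toReal_sub_le_symmDiff ν S C
  have tri : |(μ S).toReal - (ν S).toReal| ≤
      |(μ S).toReal - (μ C).toReal| + |(μ C).toReal - (ν C).toReal|
        + |(ν C).toReal - (ν S).toReal| := by
    have := abs_sub_le ((μ S).toReal) ((μ C).toReal) ((ν S).toReal)
    have h2 := abs_sub_le ((μ C).toReal) ((ν C).toReal) ((ν S).toReal)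
    linarith
  have e2' : |(ν C).toReal - (ν S).toReal| ≤ (ν (S ∆ C)).toReal := by
    rwa [abs_sub_comm] at e2
  have : |(μ S).toReal - (ν S).toReal| < η + δ + η := by
    have := tri
    linarith
  simp only [hη] at this
  linarith

end Approx

section Law

variable {Ω M Γ : Type*} [MeasurableSpace Ω] [MeasurableSpace M]

lemma map_restrict (Pr : Measure Ω) [IsProbabilityMeasure Pr] (X : Γ → Ω → M)
    (hmeas : ∀ k, Measurable (X k))
    (hindep : iIndepFun X Pr)
    (p : Γ → Measure M) [∀ k, IsProbabilityMeasure (p k)]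
    (hdist : ∀ k, Measure.map (X k) Pr = p k) (t : Finset Γ) :
    Pr.map (fun ω (j : t) => X (j : Γ) ω) = Measure.pi (fun j : t => p (j : Γ)) := by
  classical
  refine (Measure.pi_eq fun A hA => ?_).symm
  have htuple : Measurable (fun ω (j : t) => X (j : Γ) ω) :=
    measurable_pi_lambda _ fun j => hmeas _
  rw [Measure.map_apply htuple (MeasurableSet.univ_pi hA)]
  set sets : Γ → Set M := fun j => if h : j ∈ t then A ⟨j, h⟩ else Set.univ with hsets
  have hsetsm : ∀ j ∈ t, MeasurableSet (sets j) := by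
    intro j hj
    simp only [hsets, dif_pos hj]
    exact hA _
  have hpre : (fun ω (j : t) => X (j : Γ) ω) ⁻¹' Set.pi Set.univ A
      = ⋂ j ∈ t, X j ⁻¹' sets j := by
    ext ω
    simp only [Set.mem_preimage, Set.mem_pi, Set.mem_univ, forall_true_left, Set.mem_iInter]
    constructor
    · intro h j hj
      simp only [hsets, dif_pos hj, Set.mem_preimage]
      exact h ⟨j, hj⟩
    · intro h j
      have hh := h (j : Γ) j.2
      simp only [hsets, dif_pos j.2, Set.mem_preimage] at hh
      exact hh
  rw [hpre, hindep.measure_inter_preimage_eq_mul t hsetsm,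
    ← Finset.prod_coe_sort t (fun j => Pr (X j ⁻¹' sets j))]
  refine Finset.prod_congr rfl fun j _ => ?_
  have hsj : sets (j : Γ) = A j := by simp only [hsets, dif_pos j.2]
  rw [hsj, ← hdist (j : Γ), Measure.map_apply (hmeas _) (hA j)]

lemma map_tuple (Pr : Measure Ω) [IsProbabilityMeasure Pr] (X : Γ → Ω → M)
    (hmeas : ∀ k, Measurable (X k))
    (hindep : iIndepFun X Pr)
    (p : Γ → Measure M) [∀ k, IsProbabilityMeasure (p k)]
    (hdist : ∀ k, Measure.map (X k) Pr = p k)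
    (τ : Γ → Γ) (hτ : Function.Injective τ) (s : Finset Γ) :
    Pr.map (fun ω (i : s) => X (τ (i : Γ)) ω) = Measure.pi (fun i : s => p (τ (i : Γ))) := by
  classical
  set t : Finset Γ := s.image τ with ht
  have hbase := map_restrict Pr X hmeas hindep p hdist t
  have hf : ∀ i : s, τ (i : Γ) ∈ t := fun i => Finset.mem_image_of_mem τ i.2
  set f : {i // i ∈ s} → {j // j ∈ t} := fun i => ⟨τ i, hf i⟩ with hfdef
  have hfinj : Function.Injective f := fun i j hij =>
    Subtype.ext (hτ (congrArg Subtype.val hij))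
  have hfsurj : Function.Surjective f := by
    rintro ⟨j, hj⟩
    obtain ⟨i, hi, rfl⟩ := Finset.mem_image.1 hj
    exact ⟨⟨i, hi⟩, rfl⟩
  set g : {j // j ∈ t} ≃ {i // i ∈ s} := (Equiv.ofBijective f ⟨hfinj, hfsurj⟩).symm with hg
  have hgτ : ∀ j : t, τ ((g j : {i // i ∈ s}) : Γ) = (j : Γ) := by
    intro j
    have h1 := (Equiv.ofBijective f ⟨hfinj, hfsurj⟩).apply_symm_apply j
    exact congrArg Subtype.val h1
  have hmp := Measure.pi_map_piCongrLeft g (fun i : s => p (τ (i : Γ)))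
  have hfun : (fun j : t => p (τ ((g j : {i // i ∈ s}) : Γ))) = fun j : t => p (j : Γ) :=
    funext fun j => by rw [hgτ j]
  rw [hfun] at hmp
  have htuple : Measurable (fun ω (j : t) => X (j : Γ) ω) :=
    measurable_pi_lambda _ fun j => hmeas _
  have hcomp : (fun ω (i : s) => X (τ (i : Γ)) ω)
      = (fun h => (MeasurableEquiv.piCongrLeft (fun _ : s => M) g) h)
          ∘ (fun ω (j : t) => X (j : Γ) ω) := by
    funext ω
    funext i
    have h1 := MeasurableEquiv.piCongrLeft_apply_apply (β := fun _ : {i // i ∈ s} => M) g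
      (fun j : t => X (j : Γ) ω) (g.symm i)
    rw [g.apply_symm_apply] at h1
    have h2 : ((g.symm i : {j // j ∈ t}) : Γ) = τ (i : Γ) := by
      simp only [hg, Equiv.symm_symm, Equiv.ofBijective_apply, hfdef]
    simp only [Function.comp_apply]
    rw [h1, h2]
  rw [hcomp, ← Measure.map_map (MeasurableEquiv.measurable _) htuple, hbase]
  exact hmp

end Law

open scoped symmDiff

/-- **Zero-one law for independent but not identically distributed random variables.**
If for every finite `J ⊆ Γ` and every `δ > 0` the event `E` has an injective positional
symmetry `π` with `π(J) ∩ J = ∅` and `∑_k ‖p_{π(k)} - p_k‖_TV < δ`, then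
`P(X ∈ E) ∈ {0,1}`. -/
theorem independent_symmetric_zero_one_law
    {Ω M Γ : Type*} [MeasurableSpace Ω] [MeasurableSpace M] [Countable Γ]
    (Pr : Measure Ω) [IsProbabilityMeasure Pr]
    (X : Γ → Ω → M) (hmeas : ∀ k, Measurable (X k))
    (hindep : iIndepFun X Pr)
    (p : Γ → Measure M) [∀ k, IsProbabilityMeasure (p k)]
    (hdist : ∀ k, Measure.map (X k) Pr = p k)
    (E : Set (Γ → M)) (hE : MeasurableSet E)
    (hsym : ∀ (J : Finset Γ) (δ : ℝ), 0 < δ → ∃ π : Γ → Γ, Function.Injective π ∧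
      (∀ a : Γ → M, a ∈ E ↔ (fun k => a (π k)) ∈ E) ∧
      (∀ j ∈ J, π j ∉ J) ∧
      (∑' k : Γ, ENNReal.ofReal (tvDist (p (π k)) (p k))) < ENNReal.ofReal δ) :
    Pr {ω | (fun k => X k ω) ∈ E} = 0 ∨ Pr {ω | (fun k => X k ω) ∈ E} = 1 := by
  classical
  set Xv : Ω → (Γ → M) := fun ω k => X k ω with hXvdef
  have hXvm : Measurable Xv := measurable_pi_lambda _ hmeas
  set A : Set Ω := Xv ⁻¹' E with hAdef
  have hgoalset : {ω | (fun k => X k ω) ∈ E} = A := rfl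
  rw [hgoalset]
  set α : ℝ := (Pr A).toReal with hαdef
  have hα0 : 0 ≤ α := ENNReal.toReal_nonneg
  have hα1 : α ≤ 1 := toReal_prob_le_one _ _
  set μ : Measure (Γ → M) := Pr.map Xv with hμdef
  haveI : IsProbabilityMeasure μ := Measure.isProbabilityMeasure_map hXvm.aemeasurable
  have hPrA : Pr A = μ E := (Measure.map_apply hXvm hE).symm
  have halg : IsSetAlgebra (measurableCylinders (fun _ : Γ => M)) :=
    ⟨empty_mem_measurableCylinders _, fun s hs => compl_mem_measurableCylinders hs,
     fun s t hs ht => union_mem_measurableCylinders hs ht⟩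
  have key : ∀ ε : ℝ, 0 < ε → |α - α * α| ≤ 6 * ε := by
    intro ε hε
    have hdense : μ.MeasureDense (measurableCylinders (fun _ : Γ => M)) :=
      Measure.MeasureDense.of_generateFrom_isSetAlgebra_finite μ halg
        (generateFrom_measurableCylinders (α := fun _ : Γ => M)).symm
    obtain ⟨C, hCmem, hCapp⟩ := hdense.approx E hE (measure_ne_top _ _) ε hε
    obtain ⟨s, T, hT, rfl⟩ := (mem_measurableCylinders _).1 hCmem
    obtain ⟨π, hπinj, hπE, hπJ, htv⟩ := hsym s ε hε
    set Yv : Ω → (Γ → M) := fun ω k => X (π k) ω with hYvdef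
    have hYvm : Measurable Yv := measurable_pi_lambda _ fun k => hmeas _
    set ν : Measure (Γ → M) := Pr.map Yv with hνdef
    haveI : IsProbabilityMeasure ν := Measure.isProbabilityMeasure_map hYvm.aemeasurable
    have hAY : A = Yv ⁻¹' E := Set.ext fun ω => hπE (Xv ω)
    have hPrAν : Pr A = ν E := by rw [hAY]; exact (Measure.map_apply hYvm hE).symm
    -- tv sums over finite sets are at most ε
    have hsumgen : ∀ s' : Finset Γ, (∑ k ∈ s', tvDist (p (π k)) (p k)) ≤ ε := by
      intro s'
      have h1 : (∑ k ∈ s', ENNReal.ofReal (tvDist (p (π k)) (p k)))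
          ≤ ∑' k : Γ, ENNReal.ofReal (tvDist (p (π k)) (p k)) := ENNReal.sum_le_tsum s'
      have h2 := lt_of_le_of_lt h1 htv
      rw [← ENNReal.ofReal_sum_of_nonneg (fun k _ => tvDist_nonneg _ _)] at h2
      exact le_of_lt ((ENNReal.ofReal_lt_ofReal_iff hε).1 h2)
    -- cylinder measure computations
    have hμcyl : ∀ (s' : Finset Γ) (T' : Set ((i : s') → M)), MeasurableSet T' →
        μ (cylinder s' T') = Measure.pi (fun i : s' => p (i : Γ)) T' := by
      intro s' T' hT'
      have hcm : Xv ⁻¹' cylinder s' T' = (fun ω (i : s') => X (i : Γ) ω) ⁻¹' T' := rfl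
      rw [hμdef, Measure.map_apply hXvm (MeasurableSet.cylinder s' hT'), hcm,
        ← Measure.map_apply (measurable_pi_lambda _ fun i => hmeas _) hT',
        map_restrict Pr X hmeas hindep p hdist s']
    have hνcyl : ∀ (s' : Finset Γ) (T' : Set ((i : s') → M)), MeasurableSet T' →
        ν (cylinder s' T') = Measure.pi (fun i : s' => p (π (i : Γ))) T' := by
      intro s' T' hT'
      have hcm : Yv ⁻¹' cylinder s' T' = (fun ω (i : s') => X (π (i : Γ)) ω) ⁻¹' T' := rfl
      rw [hνdef, Measure.map_apply hYvm (MeasurableSet.cylinder s' hT'), hcm,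
        ← Measure.map_apply (measurable_pi_lambda _ fun i => hmeas _) hT',
        map_tuple Pr X hmeas hindep p hdist π hπinj s']
    -- total variation bound between ν and μ
    have hTV : TVLE ν μ ε := by
      apply tvle_of_cylinders
      intro S hS
      obtain ⟨s', T', hT', rfl⟩ := (mem_measurableCylinders _).1 hS
      rw [hμcyl s' T' hT', hνcyl s' T' hT']
      have hpi := TVLE.pi (Finset.univ : Finset s')
        (fun i : s' => p (π (i : Γ))) (fun i : s' => p (i : Γ))
        (fun _ => inferInstance) (fun _ => inferInstance) (by simp)
      calc |((Measure.pi fun i : s' => p (π (i : Γ))) T').toReal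
            - ((Measure.pi fun i : s' => p (i : Γ)) T').toReal|
          ≤ ∑ i : s', tvDist (p (π (i : Γ))) (p (i : Γ)) := hpi T' hT'
        _ = ∑ k ∈ s', tvDist (p (π k)) (p k) :=
            Finset.sum_coe_sort s' (fun k => tvDist (p (π k)) (p k))
        _ ≤ ε := hsumgen s'
    -- the events B and B'
    set B : Set Ω := Xv ⁻¹' (cylinder s T) with hBdef
    set B' : Set Ω := Yv ⁻¹' (cylinder s T) with hB'def
    have hPrB : Pr B = μ (cylinder s T) :=
      (Measure.map_apply hXvm (MeasurableSet.cylinder s hT)).symm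
    have hPrB' : Pr B' = ν (cylinder s T) :=
      (Measure.map_apply hYvm (MeasurableSet.cylinder s hT)).symm
    -- independence of B and B'
    have hdisj : Disjoint s (s.image π) := by
      rw [Finset.disjoint_left]
      intro k hk hkim
      obtain ⟨j, hj, rfl⟩ := Finset.mem_image.1 hkim
      exact hπJ j hj hk
    have hIF := hindep.indepFun_finset s (s.image π) hdisj hmeas
    set φ : ((j : (s.image π : Finset Γ)) → M) → ((i : s) → M) :=
      fun h i => h ⟨π (i : Γ), Finset.mem_image_of_mem π i.2⟩ with hφdef
    have hφm : Measurable φ := measurable_pi_lambda _ fun i => measurable_pi_apply _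
    have hIF2 := hIF.comp measurable_id hφm
    have hBB' : Pr (B ∩ B') = Pr B * Pr B' :=
      (indepFun_iff_measure_inter_preimage_eq_mul.1 hIF2) T T hT hT
    -- real number estimates
    set rB : ℝ := (Pr B).toReal with hrBdef
    set rB' : ℝ := (Pr B').toReal with hrB'def
    have hrB0 : 0 ≤ rB := ENNReal.toReal_nonneg
    have hrB1 : rB ≤ 1 := toReal_prob_le_one _ _
    have hrB'0 : 0 ≤ rB' := ENNReal.toReal_nonneg
    have hrB'1 : rB' ≤ 1 := toReal_prob_le_one _ _
    have hEC : (μ (E ∆ cylinder s T)).toReal < ε :=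
      (ENNReal.lt_ofReal_iff_toReal_lt (measure_ne_top _ _)).1 hCapp
    have h1 : |α - rB| ≤ ε := by
      rw [hαdef, hrBdef, hPrA, hPrB]
      exact (abs_toReal_sub_le_symmDiff μ E _).trans (le_of_lt hEC)
    have hνEC : (ν (E ∆ cylinder s T)).toReal ≤ 2 * ε := by
      have h' := abs_le.1 (hTV (E ∆ cylinder s T)
        (hE.symmDiff (MeasurableSet.cylinder s hT)))
      have := h'.2
      linarith
    have h2 : |α - rB'| ≤ 2 * ε := by
      rw [hαdef, hrB'def, hPrAν, hPrB']
      exact (abs_toReal_sub_le_symmDiff ν E _).trans hνEC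
    -- symmetric difference of A with B ∩ B'
    have hABsub : A ∆ (B ∩ B') ⊆ (A ∆ B) ∪ (A ∆ B') := by
      intro x hx
      rcases Set.mem_symmDiff.1 hx with ⟨hxA, hxn⟩ | ⟨hxBB, hxnA⟩
      · by_cases hb : x ∈ B
        · exact Set.mem_union_right _
            (Set.mem_symmDiff.2 (Or.inl ⟨hxA, fun hb' => hxn ⟨hb, hb'⟩⟩))
        · exact Set.mem_union_left _ (Set.mem_symmDiff.2 (Or.inl ⟨hxA, hb⟩))
      · exact Set.mem_union_left _ (Set.mem_symmDiff.2 (Or.inr ⟨hxBB.1, hxnA⟩))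
    have hpreAB : A ∆ B = Xv ⁻¹' (E ∆ cylinder s T) := by
      ext x
      simp only [Set.mem_symmDiff, Set.mem_preimage, hAdef, hBdef]
    have hpreAB' : A ∆ B' = Yv ⁻¹' (E ∆ cylinder s T) := by
      rw [hAY]
      ext x
      simp only [Set.mem_symmDiff, Set.mem_preimage, hB'def]
    have hPrAB : (Pr (A ∆ B)).toReal < ε := by
      rw [hpreAB, ← Measure.map_apply hXvm
        (hE.symmDiff (MeasurableSet.cylinder s hT)), ← hμdef]
      exact hEC
    have hPrAB' : (Pr (A ∆ B')).toReal ≤ 2 * ε := by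
      rw [hpreAB', ← Measure.map_apply hYvm
        (hE.symmDiff (MeasurableSet.cylinder s hT)), ← hνdef]
      exact hνEC
    have h3 : |α - rB * rB'| ≤ 3 * ε := by
      have hm0 : Pr (A ∆ (B ∩ B')) ≤ Pr (A ∆ B) + Pr (A ∆ B') :=
        (measure_mono hABsub).trans (measure_union_le _ _)
      have hm1 : (Pr (A ∆ (B ∩ B'))).toReal
          ≤ (Pr (A ∆ B)).toReal + (Pr (A ∆ B')).toReal := by
        have h := ENNReal.toReal_mono
          (ENNReal.add_ne_top.2 ⟨measure_ne_top _ _, measure_ne_top _ _⟩) hm0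
        rwa [ENNReal.toReal_add (measure_ne_top _ _) (measure_ne_top _ _)] at h
      have habs : |α - (Pr (B ∩ B')).toReal| ≤ (Pr (A ∆ (B ∩ B'))).toReal :=
        abs_toReal_sub_le_symmDiff Pr A (B ∩ B')
      rw [hBB', ENNReal.toReal_mul, ← hrBdef, ← hrB'def] at habs
      linarith
    -- combine
    have e1 := abs_le.1 h1
    have e2 := abs_le.1 h2
    have e3 := abs_le.1 h3
    rw [abs_le]
    constructor <;> nlinarith [mul_nonneg hrB0 hrB'0, mul_le_one₀ hrB1 hrB'0 hrB'1,
      sq_nonneg (α - rB), sq_nonneg (α - rB')]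
  -- conclude α = α * α
  have hroot : α = α * α := by
    by_contra hne
    have hpos : 0 < |α - α * α| := abs_pos.2 (sub_ne_zero.2 hne)
    have hk := key (|α - α * α| / 12) (by positivity)
    linarith
  have hfac : α * (1 - α) = 0 := by ring_nf; linarith [hroot]
  rcases mul_eq_zero.1 hfac with h0 | h1
  · left
    have hz : (Pr A).toReal = 0 := h0
    rcases (ENNReal.toReal_eq_zero_iff _).1 hz with h | h
    · exact h
    · exact absurd h (measure_ne_top _ _)
  · right
    have ho : (Pr A).toReal = 1 := by linarith
    exact (ENNReal.toReal_eq_one_iff _).1 ho
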